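/- arXiv:2002.07519 — 5 statements merged into one kernel-verified Lean document; each statement's English description precedes it below -/
import Mathlib

section
/- Let R be a unique factorization domain and let M ⊆ N be finitely generated R-modules such that M is a free R-module. If the quotient N/M contains a non-zero pseudo-null R-submodule, then N itself contains a non-zero pseudo-null R-submodule. -/
/-- An `R`-submodule `P` of `M` is *pseudo-null* if every element of `P` is annihilated by
two relatively prime elements of `R` (i.e., in a UFD, by two elements sharing no common
prime factor). -/
def Submodule.IsPseudoNull {R M : Type*} [CommRing R] [AddCommGroup M] [Module R M]
    (P : Submodule R M) : Prop :=
  ∀ x ∈ P, ∃ r s : R, IsRelPrime r s ∧ r • x = 0 ∧ s • x = 0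

/-- In a free module over a domain, if `s • m = r • m'` with `r, s` relatively prime
(and the ring a decomposition monoid, e.g. a UFD), then `r` divides `m`. -/
lemma exists_smul_eq_of_isRelPrime {R : Type*} [CommRing R] [IsDomain R] [DecompositionMonoid R]
    {M : Type*} [AddCommGroup M] [Module R M] [Module.Free R M]
    {r s : R} (hr : r ≠ 0) (hrs : IsRelPrime r s) {m m' : M} (h : s • m = r • m') :
    ∃ m'' : M, m = r • m'' := by
  classical
  let b := Module.Free.chooseBasis R M
  have hco : ∀ i, r ∣ b.repr m i := by
    intro i
    have : s * b.repr m i = r * b.repr m' i := by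
      have := congrArg (fun z => b.repr z i) h
      simpa using this
    exact hrs.dvd_of_dvd_mul_left ⟨b.repr m' i, this⟩
  set f : R → R := fun a => if h : r ∣ a then h.choose else 0 with hf
  have hf0 : f 0 = 0 := by
    rw [hf]
    simp only [dvd_zero, dif_pos]
    have := (dvd_zero r).choose_spec
    rcases mul_eq_zero.mp this.symm with h1 | h1
    · exact absurd h1 hr
    · exact h1
  refine ⟨b.repr.symm ((b.repr m).mapRange f hf0), ?_⟩
  have : r • ((b.repr m).mapRange f hf0) = b.repr m := by
    ext i
    have hd := hco i
    simp only [Finsupp.smul_apply, Finsupp.mapRange_apply, hf, dif_pos hd, smul_eq_mul]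
    exact hd.choose_spec.symm
  calc m = b.repr.symm (b.repr m) := (b.repr.symm_apply_apply m).symm
    _ = b.repr.symm (r • ((b.repr m).mapRange f hf0)) := by rw [this]
    _ = r • b.repr.symm ((b.repr m).mapRange f hf0) := by rw [map_smul]

/-- Let `R` be a unique factorization domain and `M ⊆ N` finitely generated `R`-modules with
`M` free.  If `N/M` contains a non-zero pseudo-null `R`-submodule, then so does `N`. -/
theorem exists_pseudoNull_submodule_of_quotient {R : Type*} [CommRing R] [IsDomain R]
    [UniqueFactorizationMonoid R] {N : Type*} [AddCommGroup N] [Module R N]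
    [Module.Finite R N] (M : Submodule R N) (hMfg : M.FG) (hMfree : Module.Free R M)
    (h : ∃ P : Submodule R (N ⧸ M), P ≠ ⊥ ∧ P.IsPseudoNull) :
    ∃ P : Submodule R N, P ≠ ⊥ ∧ P.IsPseudoNull := by
  obtain ⟨P, hPbot, hP⟩ := h
  obtain ⟨y, hyP, hy0⟩ := Submodule.exists_mem_ne_zero_of_ne_bot hPbot
  obtain ⟨r, s, hrs, hry, hsy⟩ := hP y hyP
  have hr : r ≠ 0 := by
    rintro rfl
    obtain ⟨u, rfl⟩ := isRelPrime_zero_left.mp hrs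
    apply hy0
    have := congrArg (fun w => (↑u⁻¹ : R) • w) hsy
    simpa [smul_smul] using this
  obtain ⟨x, rfl⟩ := Submodule.Quotient.mk_surjective M y
  have hrx : r • x ∈ M := by
    rwa [← Submodule.Quotient.mk_eq_zero, Submodule.Quotient.mk_smul]
  have hsx : s • x ∈ M := by
    rwa [← Submodule.Quotient.mk_eq_zero, Submodule.Quotient.mk_smul]
  have hcomm : s • (⟨r • x, hrx⟩ : M) = r • (⟨s • x, hsx⟩ : M) :=
    Subtype.ext (smul_comm s r x)
  obtain ⟨m'', hm''⟩ := exists_smul_eq_of_isRelPrime hr hrs hcomm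
  set z : N := x - (m'' : N) with hz
  have hrz : r • z = 0 := by
    have : r • (m'' : N) = r • x := by
      have := congrArg (Submodule.subtype M) hm''.symm
      simpa using this
    rw [hz, smul_sub, this, sub_self]
  have hszM : s • z ∈ M := by
    rw [hz, smul_sub]
    exact M.sub_mem hsx (M.smul_mem s m''.2)
  have hsz : s • z = 0 := by
    have h1 : r • (⟨s • z, hszM⟩ : M) = 0 := by
      ext
      simp only [SetLike.mk_smul_mk, ZeroMemClass.coe_zero]
      rw [smul_comm, hrz, smul_zero]
    rcases smul_eq_zero.mp h1 with h2 | h2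
    · exact absurd h2 hr
    · exact congrArg (Submodule.subtype M) h2
  have hz0 : z ≠ 0 := by
    intro hzz
    apply hy0
    have hm0 : Submodule.Quotient.mk (p := M) (m'' : N) = 0 :=
      (Submodule.Quotient.mk_eq_zero M).mpr m''.2
    have : Submodule.Quotient.mk (p := M) z = Submodule.Quotient.mk x := by
      rw [hz, Submodule.Quotient.mk_sub, hm0, sub_zero]
    rw [← this, hzz, Submodule.Quotient.mk_zero]
  refine ⟨Submodule.span R {z}, ?_, ?_⟩
  · simpa [Submodule.span_singleton_eq_bot] using hz0
  · intro w hw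
    obtain ⟨a, rfl⟩ := Submodule.mem_span_singleton.mp hw
    exact ⟨r, s, hrs, by rw [smul_comm, hrz, smul_zero], by rw [smul_comm, hsz, smul_zero]⟩
end

section
/- Let R be a unique factorization domain, N a finitely generated torsion-free R-module, and x ∈ N. Then the quotient module N/Rx contains no non-zero pseudo-null R-submodule. -/
/-- Let `R` be a unique factorization domain, `N` a finitely generated torsion-free
`R`-module and `x ∈ N`.  Then `N/Rx` contains no non-zero pseudo-null `R`-submodule. -/
theorem pseudoNull_submodule_of_quotient_span_singleton_eq_bot {R : Type*} [CommRing R]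
    [IsDomain R] [UniqueFactorizationMonoid R] {N : Type*} [AddCommGroup N] [Module R N]
    [Module.Finite R N] [NoZeroSMulDivisors R N] (x : N)
    (P : Submodule R (N ⧸ (R ∙ x))) (hP : P.IsPseudoNull) : P = ⊥ := by
  rw [eq_bot_iff]
  intro y hy
  obtain ⟨r, s, hrs, hr, hs⟩ := hP y hy
  obtain ⟨z, rfl⟩ := Submodule.Quotient.mk_surjective _ y
  rw [Submodule.mem_bot]
  rw [← Submodule.Quotient.mk_smul, Submodule.Quotient.mk_eq_zero] at hr hs
  obtain ⟨a, ha⟩ := Submodule.mem_span_singleton.mp hr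
  obtain ⟨b, hb⟩ := Submodule.mem_span_singleton.mp hs
  rw [Submodule.Quotient.mk_eq_zero, Submodule.mem_span_singleton]
  rcases eq_or_ne r 0 with h0 | h0
  · -- r = 0 forces s to be a unit
    have hu : IsUnit s := hrs (h0 ▸ dvd_zero s) dvd_rfl
    obtain ⟨u, rfl⟩ := hu
    refine ⟨(↑u⁻¹ : R) * b, ?_⟩
    calc ((↑u⁻¹ : R) * b) • x = (↑u⁻¹ : R) • (b • x) := by rw [mul_smul]
      _ = (↑u⁻¹ : R) • ((↑u : R) • z) := by rw [hb]
      _ = z := by rw [smul_smul, Units.inv_mul, one_smul]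
  · rcases eq_or_ne x 0 with hx | hx
    · subst hx
      simp only [smul_zero] at ha
      have : z = 0 := by
        rcases smul_eq_zero.mp ha.symm with h | h
        · exact absurd h h0
        · exact h
      exact ⟨0, by simp [this]⟩
    · -- (s*a - r*b) • x = 0
      have key : (s * a) • x = (r * b) • x := by
        have h1 : (s * a) • x = (s * r) • z := by
          rw [mul_smul, mul_smul, ha]
        have h2 : (r * b) • x = (r * s) • z := by
          rw [mul_smul, mul_smul, hb]
        rw [h1, h2, mul_comm]
      have heq : s * a = r * b := by
        have : (s * a - r * b) • x = 0 := by rw [sub_smul, key, sub_self]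
        rcases smul_eq_zero.mp this with h | h
        · exact sub_eq_zero.mp h
        · exact absurd h hx
      have hdvd : r ∣ a := hrs.dvd_of_dvd_mul_left ⟨b, heq⟩
      obtain ⟨c, rfl⟩ := hdvd
      refine ⟨c, ?_⟩
      have : r • (c • x) = r • z := by
        rw [← mul_smul]; exact ha
      exact (smul_right_injective N h0 this)
end

section
/- Let R be an integral domain, p ∈ R a prime element, and u : R² → R² an injective R-linear map (equivalently, an R-linear map with det u ≠ 0). Let C denote the cokernel of u. Then: (a) there is an exact sequence of R-modules 0 → C[p] → (R/pR)² → (R/pR)² → C/pC → 0, in which C[p] is the p-torsion submodule of C, the middle map is the reduction of u modulo p, and the last map is the natural projection; (b) if in addition det u ∈ pR and the reduction of u modulo p is non-zero, then C[p] and C/pC each have rank one as modules over the integral domain R/pR, i.e., each becomes a one-dimensional vector space after base change to the fraction field of R/pR. -/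
set_option maxHeartbeats 1000000



/-- The reduction of a linear map `f : M → N` modulo an ideal `I`, i.e. the induced
map `M/IM → N/IN`. -/
def LinearMap.reduceMod {R M N : Type*} [CommRing R] [AddCommGroup M] [Module R M]
    [AddCommGroup N] [Module R N] (I : Ideal R) (f : M →ₗ[R] N) :
    (M ⧸ (I • ⊤ : Submodule R M)) →ₗ[R] (N ⧸ (I • ⊤ : Submodule R N)) :=
  Submodule.mapQ _ _ f (by
    rw [← Submodule.map_le_iff_le_comap, Submodule.map_smul'']
    exact smul_mono_right I le_top)

lemma mem_span_smul_iff {R M : Type*} [CommRing R] [AddCommGroup M] [Module R M] (p : R) (x : M) :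
    x ∈ (Ideal.span {p} • ⊤ : Submodule R M) ↔ ∃ z, p • z = x := by
  constructor
  · intro h
    refine Submodule.smul_induction_on h ?_ ?_
    · rintro r hr n -
      obtain ⟨t, rfl⟩ := Ideal.mem_span_singleton.mp hr
      exact ⟨t • n, by rw [smul_smul]⟩
    · rintro x y ⟨zx, rfl⟩ ⟨zy, rfl⟩
      exact ⟨zx + zy, by rw [smul_add]⟩
  · rintro ⟨z, rfl⟩
    exact Submodule.smul_mem_smul (Ideal.mem_span_singleton_self p) trivial

lemma LinearMap.reduceMod_mk {R M N : Type*} [CommRing R] [AddCommGroup M] [Module R M]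
    [AddCommGroup N] [Module R N] (I : Ideal R) (f : M →ₗ[R] N) (x : M) :
    f.reduceMod I (Submodule.Quotient.mk x) = Submodule.Quotient.mk (f x) := by
  unfold LinearMap.reduceMod
  rw [Submodule.mapQ_apply]

lemma rank_eq_one_of_pair {S X : Type*} [CommRing S] [Nontrivial S] [AddCommGroup X] [Module S X]
    (x₀ : X) (hx₀ : ∀ c : S, c • x₀ = 0 → c = 0)
    (hdep : ∀ x y : X, ∃ c d : S, ¬(c = 0 ∧ d = 0) ∧ c • x + d • y = 0) :
    Module.rank S X = 1 := by
  apply le_antisymm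
  · apply rank_le (n := 1)
    intro s hs
    by_contra hcard
    push_neg at hcard
    obtain ⟨a, ha, b, hb, hab⟩ := Finset.one_lt_card.mp hcard
    have hinj : Function.Injective (fun t : Fin 2 => if t = 0 then (⟨a, ha⟩ : s) else ⟨b, hb⟩) := by
      intro t t' htt'
      fin_cases t <;> fin_cases t' <;> simp_all
    have hli := hs.comp _ hinj
    obtain ⟨c, d, hcd, h0⟩ := hdep a b
    have := Fintype.linearIndependent_iff.mp hli (fun t => if t = 0 then c else d) ?_
    · exact hcd ⟨by simpa using this 0, by simpa using this 1⟩
    · simpa [Fin.sum_univ_two] using h0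
  · have : LinearIndependent S (fun _ : Fin 1 => x₀) := by
      rw [Fintype.linearIndependent_iff]
      intro g hg i
      fin_cases i
      exact hx₀ _ (by simpa using hg)
    simpa using this.cardinal_lift_le_rank



/-- Let `R` be an integral domain, `p` a prime element and `u : R² → R²` an injective
linear map with cokernel `C`.  Then (a) there is an exact sequence
`0 → C[p] → (R/p)² → (R/p)² → C/pC → 0` whose middle map is the reduction of `u` mod `p`
and whose last map is the natural projection; and (b) if moreover `det u ∈ pR` and the
reduction of `u` mod `p` is non-zero, then `C[p]` and `C/pC` both have rank one over the
integral domain `R/pR`. -/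
theorem cokernel_mod_p_exact_sequence_and_rank {R : Type*} [CommRing R] [IsDomain R]
    (p : R) (hp : Prime p) (u : (Fin 2 → R) →ₗ[R] (Fin 2 → R))
    (hu : Function.Injective u) :
    (∃ δ : Submodule.torsionBy R ((Fin 2 → R) ⧸ LinearMap.range u) p →ₗ[R]
        ((Fin 2 → R) ⧸ (Ideal.span {p} • ⊤ : Submodule R (Fin 2 → R))),
      Function.Injective δ ∧
      LinearMap.range δ = LinearMap.ker (LinearMap.reduceMod (Ideal.span {p}) u) ∧
      LinearMap.range (LinearMap.reduceMod (Ideal.span {p}) u) =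
        LinearMap.ker
          (LinearMap.reduceMod (Ideal.span {p}) (LinearMap.range u).mkQ) ∧
      Function.Surjective
        (LinearMap.reduceMod (Ideal.span {p}) (LinearMap.range u).mkQ)) ∧
    (LinearMap.det u ∈ Ideal.span {p} →
      LinearMap.reduceMod (Ideal.span {p}) u ≠ 0 →
      Module.rank (R ⧸ Ideal.span {p})
          (Submodule.torsionBy R ((Fin 2 → R) ⧸ LinearMap.range u) p) = 1 ∧
      Module.rank (R ⧸ Ideal.span {p})
          (((Fin 2 → R) ⧸ LinearMap.range u) ⧸
            (Ideal.span {p} • ⊤ :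
              Submodule R ((Fin 2 → R) ⧸ LinearMap.range u))) = 1) := by
  classical
  have hpM := mem_span_smul_iff (M := Fin 2 → R) p
  have hpMd : ∀ x : Fin 2 → R,
      x ∈ (Ideal.span {p} • ⊤ : Submodule R (Fin 2 → R)) ↔ ∀ i, p ∣ x i := by
    intro x
    rw [hpM]
    constructor
    · rintro ⟨z, rfl⟩ i; exact ⟨z i, rfl⟩
    · intro h
      exact ⟨fun i => (h i).choose, funext fun i => ((h i).choose_spec).symm⟩
  have hrep : ∀ c : Submodule.torsionBy R ((Fin 2 → R) ⧸ LinearMap.range u) p,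
      ∃ y x : Fin 2 → R,
        (Submodule.Quotient.mk x : (Fin 2 → R) ⧸ LinearMap.range u) = (c : _) ∧ u y = p • x := by
    intro c
    obtain ⟨x, hx⟩ := Submodule.Quotient.mk_surjective _ (c : (Fin 2 → R) ⧸ LinearMap.range u)
    have h : p • x ∈ LinearMap.range u := by
      rw [← Submodule.Quotient.mk_eq_zero, Submodule.Quotient.mk_smul, hx]
      exact (Submodule.mem_torsionBy_iff _ _).mp c.2
    obtain ⟨y, hy⟩ := h
    exact ⟨y, x, hx, hy⟩
  choose ν ρ hρ hν using hrep
  set δ0 : Submodule.torsionBy R ((Fin 2 → R) ⧸ LinearMap.range u) p →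
      ((Fin 2 → R) ⧸ (Ideal.span {p} • ⊤ : Submodule R (Fin 2 → R))) :=
    fun c => Submodule.Quotient.mk (ν c) with hδ0
  have madd : ∀ c c', δ0 (c + c') = δ0 c + δ0 c' := by
    intro c c'
    obtain ⟨z, hz⟩ : ρ (c + c') - ρ c - ρ c' ∈ LinearMap.range u := by
      rw [← Submodule.Quotient.mk_eq_zero]
      simp only [Submodule.Quotient.mk_sub, hρ, Submodule.coe_add]
      abel
    have hνe : ν (c + c') = ν c + ν c' + p • z := by
      apply hu
      rw [hν, map_add, map_add, hν, hν, map_smul, hz, smul_sub, smul_sub]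
      abel
    show Submodule.Quotient.mk (ν (c + c')) = Submodule.Quotient.mk (ν c) + Submodule.Quotient.mk (ν c')
    rw [hνe, ← Submodule.Quotient.mk_add, Submodule.Quotient.eq]
    exact (hpM _).mpr ⟨z, by abel⟩
  have msmul : ∀ (r : R) c, δ0 (r • c) = r • δ0 c := by
    intro r c
    obtain ⟨z, hz⟩ : ρ (r • c) - r • ρ c ∈ LinearMap.range u := by
      rw [← Submodule.Quotient.mk_eq_zero]
      simp only [Submodule.Quotient.mk_sub, Submodule.Quotient.mk_smul, hρ, Submodule.coe_smul]
      abel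
    have hνe : ν (r • c) = r • ν c + p • z := by
      apply hu
      rw [hν, map_add, map_smul, hν, map_smul, hz, smul_sub, smul_comm r p]
      abel
    show Submodule.Quotient.mk (ν (r • c)) = r • Submodule.Quotient.mk (ν c)
    rw [hνe, ← Submodule.Quotient.mk_smul, Submodule.Quotient.eq]
    exact (hpM _).mpr ⟨z, by abel⟩
  let δ : Submodule.torsionBy R ((Fin 2 → R) ⧸ LinearMap.range u) p →ₗ[R]
      ((Fin 2 → R) ⧸ (Ideal.span {p} • ⊤ : Submodule R (Fin 2 → R))) :=
    { toFun := δ0, map_add' := madd, map_smul' := msmul }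
  have hinj : Function.Injective δ := by
  -- injective
      have hker : ∀ c, δ0 c = 0 → c = 0 := by
        intro c h0
        rw [hδ0] at h0
        rw [Submodule.Quotient.mk_eq_zero, hpM] at h0
        obtain ⟨z, hz⟩ := h0
        have huz : u z = ρ c := by
          have h1 : p • u z = p • ρ c := by rw [← map_smul, hz, hν]
          funext i
          have := congrFun h1 i
          simp only [Pi.smul_apply, smul_eq_mul] at this
          exact mul_left_cancel₀ hp.ne_zero this
        have : (c : (Fin 2 → R) ⧸ LinearMap.range u) = 0 := by
          rw [← hρ, ← huz, Submodule.Quotient.mk_eq_zero]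
          exact ⟨z, rfl⟩
        exact Subtype.ext this
      intro a b hab
      have : a - b = 0 := hker _ (by
        show δ0 (a - b) = 0
        have : δ0 (a - b) = δ0 a - δ0 b := by
          have := madd (a - b) b
          simp only [sub_add_cancel] at this
          rw [this]; abel
        rw [this]
        have hab' : δ0 a = δ0 b := hab
        rw [hab', sub_self])
      exact sub_eq_zero.mp this
  have hr1 : LinearMap.range δ = LinearMap.ker (LinearMap.reduceMod (Ideal.span {p}) u) := by
  -- range δ = ker ū
      ext x
      simp only [LinearMap.mem_range, LinearMap.mem_ker]
      constructor
      · rintro ⟨c, rfl⟩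
        show LinearMap.reduceMod (Ideal.span {p}) u (δ0 c) = 0
        rw [hδ0, LinearMap.reduceMod_mk, Submodule.Quotient.mk_eq_zero]
        exact (hpM _).mpr ⟨ρ c, (hν c).symm⟩
      · intro hx
        obtain ⟨v, rfl⟩ := Submodule.Quotient.mk_surjective _ x
        rw [LinearMap.reduceMod_mk, Submodule.Quotient.mk_eq_zero, hpM] at hx
        obtain ⟨w, hw⟩ := hx
        have hct : (Submodule.Quotient.mk w : (Fin 2 → R) ⧸ LinearMap.range u) ∈
            Submodule.torsionBy R ((Fin 2 → R) ⧸ LinearMap.range u) p := by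
          rw [Submodule.mem_torsionBy_iff, ← Submodule.Quotient.mk_smul, hw,
            Submodule.Quotient.mk_eq_zero]
          exact ⟨v, rfl⟩
        set ct : Submodule.torsionBy R ((Fin 2 → R) ⧸ LinearMap.range u) p := ⟨_, hct⟩ with hctd
        obtain ⟨m, hm⟩ : ρ ct - w ∈ LinearMap.range u := by
          rw [← Submodule.Quotient.mk_eq_zero, Submodule.Quotient.mk_sub, hρ]
          show (ct : (Fin 2 → R) ⧸ LinearMap.range u) - Submodule.Quotient.mk w = 0
          rw [hctd]
          exact sub_self _
        have hνct : ν ct = v + p • m := by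
          apply hu
          rw [hν, map_add, map_smul, hm, smul_sub, ← hw]
          abel
        refine ⟨ct, ?_⟩
        show Submodule.Quotient.mk (ν ct) = Submodule.Quotient.mk v
        rw [hνct, Submodule.Quotient.eq]
        exact (hpM _).mpr ⟨m, by abel⟩
  have hr2 : LinearMap.range (LinearMap.reduceMod (Ideal.span {p}) u) =
      LinearMap.ker (LinearMap.reduceMod (Ideal.span {p}) (LinearMap.range u).mkQ) := by
  -- range ū = ker (mkQ bar)
      ext x
      simp only [LinearMap.mem_range, LinearMap.mem_ker]
      constructor
      · rintro ⟨y, rfl⟩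
        obtain ⟨v, rfl⟩ := Submodule.Quotient.mk_surjective _ y
        rw [LinearMap.reduceMod_mk, LinearMap.reduceMod_mk]
        have h0 : (LinearMap.range u).mkQ (u v) = 0 := by
          rw [Submodule.mkQ_apply, Submodule.Quotient.mk_eq_zero]
          exact ⟨v, rfl⟩
        rw [h0]
        exact Submodule.Quotient.mk_eq_zero _ |>.mpr (zero_mem _)
      · intro hx
        obtain ⟨v, rfl⟩ := Submodule.Quotient.mk_surjective _ x
        rw [LinearMap.reduceMod_mk, Submodule.Quotient.mk_eq_zero, mem_span_smul_iff] at hx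
        obtain ⟨z, hz⟩ := hx
        obtain ⟨w, rfl⟩ := Submodule.Quotient.mk_surjective _ z
        rw [Submodule.mkQ_apply, ← Submodule.Quotient.mk_smul] at hz
        obtain ⟨m, hm⟩ := (Submodule.Quotient.eq _).mp hz
        refine ⟨Submodule.Quotient.mk (-m), ?_⟩
        rw [LinearMap.reduceMod_mk, Submodule.Quotient.eq]
        refine (hpM _).mpr ⟨-w, ?_⟩
        have h2 : u m = p • w - v := hm
        rw [map_neg, h2, smul_neg]
        abel
  have hsurj : Function.Surjective (LinearMap.reduceMod (Ideal.span {p}) (LinearMap.range u).mkQ) := by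
  -- surjectivity
      intro x
      obtain ⟨y, rfl⟩ := Submodule.Quotient.mk_surjective _ x
      obtain ⟨v, rfl⟩ := Submodule.Quotient.mk_surjective _ y
      exact ⟨Submodule.Quotient.mk v, by rw [LinearMap.reduceMod_mk, Submodule.mkQ_apply]⟩

  refine ⟨⟨δ, hinj, hr1, hr2, hsurj⟩, fun hdet hne => ?_⟩
  have hpM := mem_span_smul_iff (M := Fin 2 → R) p
  have hpMd : ∀ x : Fin 2 → R,
      x ∈ (Ideal.span {p} • ⊤ : Submodule R (Fin 2 → R)) ↔ ∀ i, p ∣ x i := by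
    intro x
    rw [hpM]
    constructor
    · rintro ⟨z, rfl⟩ i; exact ⟨z i, rfl⟩
    · intro h
      exact ⟨fun i => (h i).choose, funext fun i => ((h i).choose_spec).symm⟩
  haveI hIP : (Ideal.span {p}).IsPrime := (Ideal.span_singleton_prime hp.ne_zero).mpr hp
  haveI : Nontrivial (R ⧸ Ideal.span {p}) :=
    Ideal.Quotient.nontrivial_iff.mpr (by exact hIP.ne_top)
  have mkzero : ∀ r : R, (Ideal.Quotient.mk (Ideal.span {p}) r = 0) ↔ p ∣ r := by
    intro r
    rw [Ideal.Quotient.eq_zero_iff_mem, Ideal.mem_span_singleton]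
  -- matrix entries
  set A : Fin 2 → Fin 2 → R := fun i j => u (Pi.single j 1) i with hAdef
  have hexp : ∀ (v : Fin 2 → R) (i : Fin 2), u v i = v 0 * A i 0 + v 1 * A i 1 := by
    intro v i
    have hv : v = v 0 • (Pi.single 0 1 : Fin 2 → R) + v 1 • (Pi.single 1 1 : Fin 2 → R) := by
      funext j; fin_cases j <;> simp
    calc u v i = (v 0 • u (Pi.single 0 1) + v 1 • u (Pi.single 1 1)) i := by
          rw [← map_smul, ← map_smul, ← map_add, ← hv]
      _ = v 0 * A i 0 + v 1 * A i 1 := by simp [hAdef]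
  have hdet2 : p ∣ A 0 0 * A 1 1 - A 0 1 * A 1 0 := by
    have hm : ∀ i j, LinearMap.toMatrix' u i j = A i j := by
      intro i j
      have e : (fun j' => if j' = j then (1:R) else 0) = Pi.single j 1 := by
        funext j'; simp [Pi.single_apply]
      simp only [LinearMap.toMatrix'_apply, hAdef]
    have h1 : LinearMap.det u = A 0 0 * A 1 1 - A 0 1 * A 1 0 := by
      rw [← LinearMap.det_toMatrix' u, Matrix.det_fin_two, hm, hm, hm, hm]
    rw [← h1, ← Ideal.mem_span_singleton]
    exact hdet
  -- non-divisible entry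
  have hent : ∃ i j, ¬ p ∣ A i j := by
    by_contra h
    push_neg at h
    apply hne
    apply LinearMap.ext
    intro x
    obtain ⟨v, rfl⟩ := Submodule.Quotient.mk_surjective _ x
    rw [LinearMap.reduceMod_mk, LinearMap.zero_apply]
    rw [show (0 : (Fin 2 → R) ⧸ (Ideal.span {p} • ⊤ : Submodule R (Fin 2 → R))) =
      Submodule.Quotient.mk 0 from rfl]
    rw [Submodule.Quotient.eq]
    rw [show u v - 0 = u v by abel]
    rw [hpMd]
    intro i
    rw [hexp]
    exact dvd_add ((h i 0).mul_left _) ((h i 1).mul_left _)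
  obtain ⟨i₀, j₀, hα⟩ := hent
  obtain ⟨i₁, hi1, hicov⟩ : ∃ i₁, i₁ ≠ i₀ ∧ ∀ k : Fin 2, k = i₀ ∨ k = i₁ := by
    have : i₀ = 0 ∨ i₀ = 1 := by omega
    rcases this with rfl | rfl
    · exact ⟨1, by decide, by decide⟩
    · exact ⟨0, by decide, by decide⟩
  obtain ⟨j₁, hj1, hjcov⟩ : ∃ j₁, j₁ ≠ j₀ ∧ ∀ k : Fin 2, k = j₀ ∨ k = j₁ := by
    have : j₀ = 0 ∨ j₀ = 1 := by omega
    rcases this with rfl | rfl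
    · exact ⟨1, by decide, by decide⟩
    · exact ⟨0, by decide, by decide⟩
  have hDD : p ∣ A i₀ j₀ * A i₁ j₁ - A i₀ j₁ * A i₁ j₀ := by
    obtain ⟨t, ht⟩ := hdet2
    have h0 : i₀ = 0 ∨ i₀ = 1 := by omega
    have h1 : j₀ = 0 ∨ j₀ = 1 := by omega
    rcases h0 with rfl | rfl <;> rcases h1 with rfl | rfl
    · have e1 : i₁ = 1 := by omega
      have e2 : j₁ = 1 := by omega
      rw [e1, e2]; exact ⟨t, by linear_combination ht⟩
    · have e1 : i₁ = 1 := by omega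
      have e2 : j₁ = 0 := by omega
      rw [e1, e2]; exact ⟨-t, by linear_combination -ht⟩
    · have e1 : i₁ = 0 := by omega
      have e2 : j₁ = 1 := by omega
      rw [e1, e2]; exact ⟨-t, by linear_combination -ht⟩
    · have e1 : i₁ = 0 := by omega
      have e2 : j₁ = 0 := by omega
      rw [e1, e2]; exact ⟨t, by linear_combination ht⟩
  have hexp' : ∀ (v : Fin 2 → R) (i : Fin 2), u v i = v j₀ * A i j₀ + v j₁ * A i j₁ := by
    intro v i
    rw [hexp]
    have h1 : j₀ = 0 ∨ j₀ = 1 := by omega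
    rcases h1 with rfl | rfl
    · have e : j₁ = 1 := by omega
      rw [e]
    · have e : j₁ = 0 := by omega
      rw [e]; ring
  have husing : ∀ (c : R) (i : Fin 2), u (Pi.single j₀ c) i = c * A i j₀ := by
    intro c i
    rw [hexp', Pi.single_eq_same, Pi.single_eq_of_ne hj1]
    ring
  have hφu : ∀ m : Fin 2 → R, p ∣ A i₁ j₀ * u m i₀ - A i₀ j₀ * u m i₁ := by
    intro m
    rw [hexp' m i₀, hexp' m i₁]
    obtain ⟨t, ht⟩ := hDD
    exact ⟨-(m j₁) * t, by linear_combination (-(m j₁)) * ht⟩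
  constructor
  · -- rank of torsion part
    set k : Fin 2 → R := fun j => if j = j₀ then A i₀ j₁ else -A i₀ j₀ with hkdef
    have hkj₀ : k j₀ = A i₀ j₁ := if_pos rfl
    have hkj₁ : k j₁ = -A i₀ j₀ := by rw [hkdef]; simp [hj1]
    have hk : ∀ i, p ∣ u k i := by
      intro i
      rw [hexp' k i, hkj₀, hkj₁]
      rcases hicov i with h | h <;> rw [h]
      · rw [show A i₀ j₁ * A i₀ j₀ + -A i₀ j₀ * A i₀ j₁ = 0 by ring]
        exact dvd_zero p
      · obtain ⟨t, ht⟩ := hDD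
        exact ⟨-t, by linear_combination -ht⟩
    have hζker : (Submodule.Quotient.mk k :
        (Fin 2 → R) ⧸ (Ideal.span {p} • ⊤ : Submodule R (Fin 2 → R))) ∈
        LinearMap.ker (LinearMap.reduceMod (Ideal.span {p}) u) := by
      rw [LinearMap.mem_ker, LinearMap.reduceMod_mk,
        Submodule.Quotient.mk_eq_zero, hpMd]
      exact hk
    rw [← hr1] at hζker
    obtain ⟨x₀, hx₀⟩ := hζker
    have hKrep : ∀ x : Submodule.torsionBy R ((Fin 2 → R) ⧸ LinearMap.range u) p,
        ∃ v : Fin 2 → R, Submodule.Quotient.mk v = δ x ∧ ∀ i, p ∣ u v i := by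
      intro x
      obtain ⟨v, hv⟩ := Submodule.Quotient.mk_surjective _ (δ x)
      refine ⟨v, hv, ?_⟩
      have hxk : δ x ∈ LinearMap.ker (LinearMap.reduceMod (Ideal.span {p}) u) := by
        rw [← hr1]; exact ⟨x, rfl⟩
      rw [LinearMap.mem_ker, ← hv, LinearMap.reduceMod_mk,
        Submodule.Quotient.mk_eq_zero, hpMd] at hxk
      exact hxk
    apply rank_eq_one_of_pair x₀
    · -- torsion-free
      intro s hs
      obtain ⟨r, rfl⟩ := Ideal.Quotient.mk_surjective s
      rw [Submodule.torsionBy.mk_ideal_smul] at hs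
      have h0 : r • (Submodule.Quotient.mk k :
          (Fin 2 → R) ⧸ (Ideal.span {p} • ⊤ : Submodule R (Fin 2 → R))) = 0 := by
        rw [← hx₀, ← map_smul, hs, map_zero]
      rw [← Submodule.Quotient.mk_smul, Submodule.Quotient.mk_eq_zero, hpMd] at h0
      have h2 := h0 j₁
      rw [Pi.smul_apply, hkj₁, smul_eq_mul] at h2
      have h3 : p ∣ r * A i₀ j₀ := (dvd_neg.mp (by rwa [mul_neg] at h2))
      rw [mkzero]
      exact (hp.dvd_mul.mp h3).resolve_right hα
    · -- pairwise dependence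
      intro x y
      obtain ⟨v, hv, hvK⟩ := hKrep x
      obtain ⟨w, hw, hwK⟩ := hKrep y
      have hrel_v : p ∣ v j₀ * A i₀ j₀ + v j₁ * A i₀ j₁ := by rw [← hexp']; exact hvK i₀
      have hrel_w : p ∣ w j₀ * A i₀ j₀ + w j₁ * A i₀ j₁ := by rw [← hexp']; exact hwK i₀
      by_cases hvj : p ∣ v j₁
      · have hvj0 : p ∣ v j₀ * A i₀ j₀ := by
          have := dvd_sub hrel_v (hvj.mul_right (A i₀ j₁))
          rwa [add_sub_cancel_right] at this
        have hvj0' : p ∣ v j₀ := (hp.dvd_mul.mp hvj0).resolve_right hα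
        have hx0 : x = 0 := by
          apply hinj
          rw [map_zero, ← hv, Submodule.Quotient.mk_eq_zero, hpMd]
          intro i
          rcases hjcov i with h | h <;> rw [h]
          · exact hvj0'
          · exact hvj
        refine ⟨1, 0, fun h => one_ne_zero h.1, ?_⟩
        simp [hx0]
      · refine ⟨Ideal.Quotient.mk _ (w j₁), Ideal.Quotient.mk _ (-(v j₁)), ?_, ?_⟩
        · rintro ⟨-, h2⟩
          rw [mkzero] at h2
          exact hvj (dvd_neg.mp h2)
        · rw [Submodule.torsionBy.mk_ideal_smul, Submodule.torsionBy.mk_ideal_smul]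
          apply hinj
          rw [map_zero, map_add, map_smul, map_smul, ← hv, ← hw,
            ← Submodule.Quotient.mk_smul, ← Submodule.Quotient.mk_smul,
            ← Submodule.Quotient.mk_add, Submodule.Quotient.mk_eq_zero, hpMd]
          intro i
          rcases hjcov i with h | h <;> rw [h] <;>
            simp only [Pi.add_apply, Pi.smul_apply, smul_eq_mul]
          · have key : A i₀ j₀ * (w j₁ * v j₀ + -v j₁ * w j₀) =
                w j₁ * (v j₀ * A i₀ j₀ + v j₁ * A i₀ j₁)
                  - v j₁ * (w j₀ * A i₀ j₀ + w j₁ * A i₀ j₁) := by ring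
            have h4 : p ∣ A i₀ j₀ * (w j₁ * v j₀ + -v j₁ * w j₀) := by
              rw [key]
              exact dvd_sub (hrel_v.mul_left _) (hrel_w.mul_left _)
            have h5 := (hp.dvd_mul.mp h4).resolve_left hα
            simpa using h5
          · rw [show w j₁ * v j₁ + -v j₁ * w j₁ = 0 by ring]
            exact dvd_zero p
  · -- rank of co-quotient
    have hCbar0 : ∀ g : Fin 2 → R,
        ((Submodule.Quotient.mk (Submodule.Quotient.mk g : (Fin 2 → R) ⧸ LinearMap.range u) :
          ((Fin 2 → R) ⧸ LinearMap.range u) ⧸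
            (Ideal.span {p} • ⊤ : Submodule R ((Fin 2 → R) ⧸ LinearMap.range u))) = 0)
          ↔ ∃ z m : Fin 2 → R, g = p • z + u m := by
      intro g
      rw [Submodule.Quotient.mk_eq_zero, mem_span_smul_iff]
      constructor
      · rintro ⟨z, hz⟩
        obtain ⟨z', rfl⟩ := Submodule.Quotient.mk_surjective _ z
        rw [← Submodule.Quotient.mk_smul] at hz
        obtain ⟨m, hm⟩ := (Submodule.Quotient.eq _).mp hz
        exact ⟨z', -m, by rw [map_neg, hm]; abel⟩
      · rintro ⟨z, m, rfl⟩
        refine ⟨Submodule.Quotient.mk z, ?_⟩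
        rw [← Submodule.Quotient.mk_smul, Submodule.Quotient.eq]
        exact ⟨-m, by rw [map_neg]; abel⟩
    apply rank_eq_one_of_pair
      (Submodule.Quotient.mk (Submodule.Quotient.mk (Pi.single i₁ 1) : (Fin 2 → R) ⧸ LinearMap.range u))
    · -- torsion-free
      intro s hs
      obtain ⟨r, rfl⟩ := Ideal.Quotient.mk_surjective s
      have hs' : ((Submodule.Quotient.mk
          (Submodule.Quotient.mk (r • (Pi.single i₁ 1 : Fin 2 → R)) : (Fin 2 → R) ⧸ LinearMap.range u) :
          ((Fin 2 → R) ⧸ LinearMap.range u) ⧸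
            (Ideal.span {p} • ⊤ : Submodule R ((Fin 2 → R) ⧸ LinearMap.range u))) = 0) := hs
      rw [hCbar0] at hs'
      obtain ⟨z, m, hm⟩ := hs'
      have h0 := congrFun hm i₀
      have h1 := congrFun hm i₁
      rw [Pi.smul_apply, Pi.single_eq_of_ne (Ne.symm hi1), smul_eq_mul, mul_zero,
        Pi.add_apply, Pi.smul_apply, smul_eq_mul] at h0
      rw [Pi.smul_apply, Pi.single_eq_same, smul_eq_mul, mul_one,
        Pi.add_apply, Pi.smul_apply, smul_eq_mul] at h1
      have hφm := hφu m
      obtain ⟨t, ht⟩ := hφm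
      have key : A i₀ j₀ * r =
          p * (A i₀ j₀ * z i₁ - A i₁ j₀ * z i₀) - p * t := by
        linear_combination A i₀ j₀ * h1 - A i₁ j₀ * h0 - ht
      have h4 : p ∣ A i₀ j₀ * r := ⟨(A i₀ j₀ * z i₁ - A i₁ j₀ * z i₀) - t, by linear_combination key⟩
      rw [mkzero]
      exact (hp.dvd_mul.mp h4).resolve_left hα
    · -- pairwise dependence
      intro x y
      obtain ⟨cx, rfl⟩ := Submodule.Quotient.mk_surjective _ x
      obtain ⟨v, rfl⟩ := Submodule.Quotient.mk_surjective _ cx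
      obtain ⟨cy, rfl⟩ := Submodule.Quotient.mk_surjective _ y
      obtain ⟨w, rfl⟩ := Submodule.Quotient.mk_surjective _ cy
      by_cases hb : p ∣ (A i₁ j₀ * v i₀ - A i₀ j₀ * v i₁) ∧ p ∣ (A i₁ j₀ * w i₀ - A i₀ j₀ * w i₁)
      · refine ⟨Ideal.Quotient.mk _ (A i₀ j₀), 0, ?_, ?_⟩
        · rintro ⟨h1, -⟩
          rw [mkzero] at h1
          exact hα h1
        · rw [zero_smul, add_zero]
          have e1 : (Ideal.Quotient.mk (Ideal.span {p}) (A i₀ j₀)) •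
              (Submodule.Quotient.mk (Submodule.Quotient.mk v : (Fin 2 → R) ⧸ LinearMap.range u) :
                ((Fin 2 → R) ⧸ LinearMap.range u) ⧸
                  (Ideal.span {p} • ⊤ : Submodule R ((Fin 2 → R) ⧸ LinearMap.range u))) =
              Submodule.Quotient.mk
                (Submodule.Quotient.mk (A i₀ j₀ • v) : (Fin 2 → R) ⧸ LinearMap.range u) := rfl
          rw [e1, hCbar0]
          obtain ⟨t, ht⟩ := hb.1
          refine ⟨Pi.single i₁ (-t), Pi.single j₀ (v i₀), ?_⟩
          funext i
          rcases hicov i with h | h <;> rw [h] <;>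
            simp only [Pi.add_apply, Pi.smul_apply, smul_eq_mul]
          · rw [husing, Pi.single_eq_of_ne (Ne.symm hi1)]
            ring
          · rw [husing, Pi.single_eq_same]
            linear_combination -ht
      · refine ⟨Ideal.Quotient.mk _ (A i₀ j₀ * (A i₁ j₀ * w i₀ - A i₀ j₀ * w i₁)),
            Ideal.Quotient.mk _ (-(A i₀ j₀ * (A i₁ j₀ * v i₀ - A i₀ j₀ * v i₁))), ?_, ?_⟩
        · rintro ⟨h1, h2⟩
          rw [mkzero] at h1 h2
          exact hb ⟨(hp.dvd_mul.mp ((dvd_neg.mp h2))).resolve_left hα,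
            (hp.dvd_mul.mp h1).resolve_left hα⟩
        · have e1 : (Ideal.Quotient.mk (Ideal.span {p}) (A i₀ j₀ * (A i₁ j₀ * w i₀ - A i₀ j₀ * w i₁))) •
              (Submodule.Quotient.mk (Submodule.Quotient.mk v : (Fin 2 → R) ⧸ LinearMap.range u) :
                ((Fin 2 → R) ⧸ LinearMap.range u) ⧸
                  (Ideal.span {p} • ⊤ : Submodule R ((Fin 2 → R) ⧸ LinearMap.range u))) =
              Submodule.Quotient.mk
                (Submodule.Quotient.mk ((A i₀ j₀ * (A i₁ j₀ * w i₀ - A i₀ j₀ * w i₁)) • v) :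
                  (Fin 2 → R) ⧸ LinearMap.range u) := rfl
          have e2 : (Ideal.Quotient.mk (Ideal.span {p}) (-(A i₀ j₀ * (A i₁ j₀ * v i₀ - A i₀ j₀ * v i₁)))) •
              (Submodule.Quotient.mk (Submodule.Quotient.mk w : (Fin 2 → R) ⧸ LinearMap.range u) :
                ((Fin 2 → R) ⧸ LinearMap.range u) ⧸
                  (Ideal.span {p} • ⊤ : Submodule R ((Fin 2 → R) ⧸ LinearMap.range u))) =
              Submodule.Quotient.mk
                (Submodule.Quotient.mk ((-(A i₀ j₀ * (A i₁ j₀ * v i₀ - A i₀ j₀ * v i₁))) • w) :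
                  (Fin 2 → R) ⧸ LinearMap.range u) := rfl
          rw [e1, e2, ← Submodule.Quotient.mk_add, ← Submodule.Quotient.mk_add, hCbar0]
          refine ⟨0, Pi.single j₀ ((A i₁ j₀ * w i₀ - A i₀ j₀ * w i₁) * v i₀
            - (A i₁ j₀ * v i₀ - A i₀ j₀ * v i₁) * w i₀), ?_⟩
          funext i
          rcases hicov i with h | h <;> rw [h] <;>
            simp only [Pi.add_apply, Pi.smul_apply, smul_eq_mul, smul_zero, Pi.zero_apply, zero_add] <;>
            rw [husing] <;> ring
end

section
/- Let R be a commutative Noetherian local unique factorization domain with maximal ideal 𝔪 and residue field k = R/𝔪, and assume that R/pR is a discrete valuation ring for every prime element p of R. Let G be a group, let M and N be free R-modules of rank 2, each equipped with an action of G by R-module automorphisms, and let u : M → N be a G-equivariant R-linear map such that the induced map M ⊗_R Frac(R) → N ⊗_R Frac(R) is an isomorphism and such that, for every prime element p of R, the induced map M/pM → N/pN is non-zero. If the two-dimensional k-vector space N/𝔪N has no G-stable k-subspace other than 0 and N/𝔪N itself, then u is an isomorphism of R-modules. -/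
open Matrix

private lemma matrix_factor_aux {D : Type*} [CommRing D] [IsDomain D] {π : D}
    (hπ : Irreducible π) :
    ∀ (n : ℕ) (C : Matrix (Fin 2) (Fin 2) D) (i j : Fin 2), ¬ π ^ (n + 1) ∣ C i j →
      ∃ (e : ℕ) (B : Matrix (Fin 2) (Fin 2) D), C = π ^ e • B ∧ ∃ i j, ¬ π ∣ B i j := by
  intro n
  induction n with
  | zero =>
    intro C i j h
    exact ⟨0, C, by simp, i, j, by simpa using h⟩
  | succ n ih =>
    intro C i j h
    by_cases hall : ∃ i j, ¬ π ∣ C i j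
    · exact ⟨0, C, by simp, hall⟩
    · push_neg at hall
      choose B hB using hall
      have hC : C = π • Matrix.of B := by
        ext i' j'
        simpa using hB i' j'
      have hBe : ¬ π ^ (n + 1) ∣ (Matrix.of B) i j := by
        intro hd
        apply h
        have : C i j = π * (Matrix.of B) i j := by rw [hC]; simp
        rw [this, pow_succ']
        exact mul_dvd_mul_left π hd
      obtain ⟨e, B', hB', hw⟩ := ih (Matrix.of B) i j hBe
      refine ⟨e + 1, B', ?_, hw⟩
      rw [hC, hB', pow_succ', mul_smul]

private noncomputable def redCoords {R N : Type*} [CommRing R] [AddCommGroup N] [Module R N]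
    (I : Ideal R) (b : Module.Basis (Fin 2) R N) : N →ₗ[R] (Fin 2 → R ⧸ I) where
  toFun x i := Ideal.Quotient.mk I (b.repr x i)
  map_add' x y := funext fun i => by simp
  map_smul' r x := funext fun i => by
    show Ideal.Quotient.mk I ((b.repr (r • x)) i) = r • Ideal.Quotient.mk I ((b.repr x) i)
    rw [_root_.map_smul b.repr r x, Finsupp.smul_apply]
    exact Submodule.Quotient.mk_smul _ r _

private lemma repr_mem_of_mem_smul_top {R N : Type*} [CommRing R] [AddCommGroup N] [Module R N]
    (I : Ideal R) (b : Module.Basis (Fin 2) R N) {x : N} (hx : x ∈ (I • ⊤ : Submodule R N)) :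
    ∀ i, b.repr x i ∈ I := by
  refine Submodule.smul_induction_on hx ?_ ?_
  · intro r hr n _ i
    rw [_root_.map_smul]
    exact Ideal.mul_mem_right _ I hr
  · intro x y hx hy i
    rw [map_add]
    exact I.add_mem (hx i) (hy i)

private lemma mem_smul_top_of_repr {R N : Type*} [CommRing R] [AddCommGroup N] [Module R N]
    (I : Ideal R) (b : Module.Basis (Fin 2) R N) {x : N} (h : ∀ i, b.repr x i ∈ I) :
    x ∈ (I • ⊤ : Submodule R N) := by
  rw [← b.sum_repr x]
  exact Submodule.sum_mem _ fun i _ => Submodule.smul_mem_smul (h i) Submodule.mem_top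


set_option maxHeartbeats 1000000 in
/-- Let `R` be a Noetherian local UFD whose quotient by every prime element is a discrete
valuation ring.  Let `G` act on free rank-two `R`-modules `M` and `N`, and let
`u : M → N` be a `G`-equivariant map which is an isomorphism after base change to
`Frac(R)` and is non-zero modulo every prime element of `R`.  If the residual
representation `N/𝔪N` has no non-trivial `G`-stable subspace, then `u` is an
isomorphism. -/
theorem bijective_of_residually_irreducible {R : Type*} [CommRing R] [IsDomain R]
    [UniqueFactorizationMonoid R] [IsNoetherianRing R] [IsLocalRing R]
    (hdvr : ∀ p : R, (hp : Prime p) →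
      haveI : (Ideal.span {p}).IsPrime := (Ideal.span_singleton_prime hp.ne_zero).mpr hp
      IsDiscreteValuationRing (R ⧸ Ideal.span {p}))
    {G : Type*} [Group G] {M N : Type*} [AddCommGroup M] [Module R M]
    [AddCommGroup N] [Module R N] [Module.Free R M] [Module.Finite R M]
    [Module.Free R N] [Module.Finite R N]
    (hM : Module.finrank R M = 2) (hN : Module.finrank R N = 2)
    (ρM : G →* (M ≃ₗ[R] M)) (ρN : G →* (N ≃ₗ[R] N)) (u : M →ₗ[R] N)
    (hequiv : ∀ g : G, u ∘ₗ (ρM g : M →ₗ[R] M) = (ρN g : N →ₗ[R] N) ∘ₗ u)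
    (hfrac : Function.Bijective (LinearMap.baseChange (FractionRing R) u))
    (hmodp : ∀ p : R, Prime p → LinearMap.reduceMod (Ideal.span {p}) u ≠ 0)
    (hirr : ∀ W : Submodule R
        (N ⧸ ((IsLocalRing.maximalIdeal R) • ⊤ : Submodule R N)),
      (∀ g : G, ∀ x ∈ W,
        LinearMap.reduceMod (IsLocalRing.maximalIdeal R) (ρN g : N →ₗ[R] N) x ∈ W) →
      W = ⊥ ∨ W = ⊤) :
    Function.Bijective u := by
  classical
  let bM : Module.Basis (Fin 2) R M := Module.finBasisOfFinrankEq R M hM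
  let bN : Module.Basis (Fin 2) R N := Module.finBasisOfFinrankEq R N hN
  set A : Matrix (Fin 2) (Fin 2) R := LinearMap.toMatrix bM bN u with hA
  -- matrix form of equivariance
  have hmat : ∀ g : G, A * LinearMap.toMatrix bM bM (ρM g : M →ₗ[R] M)
      = LinearMap.toMatrix bN bN (ρN g : N →ₗ[R] N) * A := by
    intro g
    rw [hA, ← LinearMap.toMatrix_comp bM bM bN, ← LinearMap.toMatrix_comp bM bN bN, hequiv g]
  -- the determinant is nonzero
  have hdet0 : A.det ≠ 0 := by
    have h1 : IsUnit ((LinearMap.toMatrix (Algebra.TensorProduct.basis (FractionRing R) bM)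
        (Algebra.TensorProduct.basis (FractionRing R) bN) (u.baseChange (FractionRing R))).det) := by
      have h2 := LinearEquiv.isUnit_det (LinearEquiv.ofBijective (u.baseChange (FractionRing R)) hfrac)
        (Algebra.TensorProduct.basis (FractionRing R) bM)
        (Algebra.TensorProduct.basis (FractionRing R) bN)
      exact h2
    rw [LinearMap.toMatrix_baseChange, ← RingHom.mapMatrix_apply, ← RingHom.map_det] at h1
    intro h0
    rw [h0, map_zero] at h1
    exact not_isUnit_zero h1
  -- no prime divides the determinant
  have hnp : ∀ p : R, Prime p → ¬ p ∣ A.det := by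
    intro p hp hdvd
    haveI hprime : (Ideal.span {p}).IsPrime := (Ideal.span_singleton_prime hp.ne_zero).mpr hp
    haveI hD : IsDiscreteValuationRing (R ⧸ Ideal.span {p}) := hdvr p hp
    let mkp : R →+* R ⧸ Ideal.span {p} := Ideal.Quotient.mk (Ideal.span {p})
    obtain ⟨π, hπ⟩ := IsDiscreteValuationRing.exists_irreducible (R ⧸ Ideal.span {p})
    set Ab : Matrix (Fin 2) (Fin 2) (R ⧸ Ideal.span {p}) := A.map mkp with hAbdef
    have hAbne : ∃ i j, Ab i j ≠ 0 := by
      by_contra hz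
      push_neg at hz
      apply hmodp p hp
      refine Submodule.linearMap_qext _ ?_
      ext x
      show LinearMap.reduceMod (Ideal.span {p}) u (Submodule.Quotient.mk x) = 0
      rw [LinearMap.reduceMod, Submodule.mapQ_apply, Submodule.Quotient.mk_eq_zero]
      apply mem_smul_top_of_repr _ bN
      intro i
      have hrepr : bN.repr (u x) i = (A *ᵥ (bM.repr x)) i := by
        rw [LinearMap.toMatrix_mulVec_repr bM bN u x]
      rw [hrepr]
      show ∑ j, A i j * bM.repr x j ∈ Ideal.span {p}
      apply Ideal.sum_mem
      intro j _
      have hAij : A i j ∈ Ideal.span {p} := by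
        have h3 := hz i j
        rwa [hAbdef, Matrix.map_apply, Ideal.Quotient.eq_zero_iff_mem] at h3
      exact Ideal.mul_mem_right _ _ hAij
    obtain ⟨i1, j1, hij⟩ := hAbne
    obtain ⟨n, un, hun⟩ := IsDiscreteValuationRing.eq_unit_mul_pow_irreducible hij hπ
    have hstart : ¬ π ^ (n + 1) ∣ Ab i1 j1 := by
      rw [hun]
      intro hdd
      have hpi : (π : R ⧸ Ideal.span {p}) ∣ (un : R ⧸ Ideal.span {p}) := by
        have h4 : π ^ (n + 1) ∣ π ^ n * (un : R ⧸ Ideal.span {p}) := by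
          rwa [mul_comm] at hdd
        rw [pow_succ] at h4
        exact (mul_dvd_mul_iff_left (pow_ne_zero n hπ.ne_zero)).mp h4
      exact hπ.not_isUnit (isUnit_of_dvd_unit hpi un.isUnit)
    obtain ⟨e, B, hfac, i0, j0, hBu⟩ := matrix_factor_aux hπ n Ab i1 j1 hstart
    have hπe : (π : R ⧸ Ideal.span {p}) ^ e ≠ 0 := pow_ne_zero _ hπ.ne_zero
    -- equivariance mod p, with the power of π cancelled
    have hBQ : ∀ g : G, B * (LinearMap.toMatrix bM bM (ρM g : M →ₗ[R] M)).map mkp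
        = (LinearMap.toMatrix bN bN (ρN g : N →ₗ[R] N)).map mkp * B := by
      intro g
      have h1 : Ab * (LinearMap.toMatrix bM bM (ρM g : M →ₗ[R] M)).map mkp
          = (LinearMap.toMatrix bN bN (ρN g : N →ₗ[R] N)).map mkp * Ab := by
        rw [hAbdef, ← Matrix.map_mul, ← Matrix.map_mul, hmat g]
      rw [hfac, Matrix.smul_mul, Matrix.mul_smul] at h1
      ext i j
      have h2 := congrFun (congrFun h1 i) j
      simp only [Matrix.smul_apply, smul_eq_mul] at h2
      exact mul_left_cancel₀ hπe h2
    -- pass to the residue field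
    let mkk : R →+* R ⧸ IsLocalRing.maximalIdeal R := Ideal.Quotient.mk _
    have hple : Ideal.span {p} ≤ IsLocalRing.maximalIdeal R := by
      rw [Ideal.span_le, Set.singleton_subset_iff]
      exact hp.not_unit
    let ν : (R ⧸ Ideal.span {p}) →+* R ⧸ IsLocalRing.maximalIdeal R :=
      Ideal.Quotient.lift (Ideal.span {p}) mkk
        (fun a ha => Ideal.Quotient.eq_zero_iff_mem.mpr (hple ha))
    have hν : ∀ r : R, ν (mkp r) = mkk r := fun r => rfl
    have hνunit : ∀ x : R ⧸ Ideal.span {p}, ν x ≠ 0 → IsUnit x := by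
      intro x hx
      obtain ⟨r, rfl⟩ := Ideal.Quotient.mk_surjective x
      rw [hν] at hx
      have hr : r ∉ IsLocalRing.maximalIdeal R := fun h =>
        hx (Ideal.Quotient.eq_zero_iff_mem.mpr h)
      have hru : IsUnit r := by
        by_contra h
        exact hr h
      exact hru.map mkp
    haveI : Nontrivial (R ⧸ IsLocalRing.maximalIdeal R) :=
      Ideal.Quotient.nontrivial_iff.mpr (Ideal.IsMaximal.ne_top inferInstance)
    set b : Matrix (Fin 2) (Fin 2) (R ⧸ IsLocalRing.maximalIdeal R) := B.map ν with hbdef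
    have hmapcomp : ∀ (X : Matrix (Fin 2) (Fin 2) R), (X.map mkp).map ν = X.map mkk := by
      intro X
      rw [Matrix.map_map]
      rfl
    have hbq : ∀ g : G, b * (LinearMap.toMatrix bM bM (ρM g : M →ₗ[R] M)).map mkk
        = (LinearMap.toMatrix bN bN (ρN g : N →ₗ[R] N)).map mkk * b := by
      intro g
      have h5 := congrArg (fun X => X.map ν) (hBQ g)
      simp only [Matrix.map_mul] at h5
      rwa [hmapcomp, hmapcomp] at h5
    have hbne : b i0 j0 ≠ 0 := by
      have hBunit : IsUnit (B i0 j0) := by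
        by_contra h
        apply hBu
        have h6 : B i0 j0 ∈ IsLocalRing.maximalIdeal (R ⧸ Ideal.span {p}) := h
        rw [(IsDiscreteValuationRing.irreducible_iff_uniformizer π).mp hπ] at h6
        exact Ideal.mem_span_singleton.mp h6
      exact (hBunit.map ν).ne_zero
    -- the residual picture
    let f𝔪 : N →ₗ[R] (Fin 2 → R ⧸ IsLocalRing.maximalIdeal R) :=
      redCoords (IsLocalRing.maximalIdeal R) bN
    have hker : ((IsLocalRing.maximalIdeal R) • ⊤ : Submodule R N) ≤ LinearMap.ker f𝔪 := by
      intro x hx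
      rw [LinearMap.mem_ker]
      funext i
      exact Ideal.Quotient.eq_zero_iff_mem.mpr (repr_mem_of_mem_smul_top _ bN hx i)
    let φ : (N ⧸ ((IsLocalRing.maximalIdeal R) • ⊤ : Submodule R N)) →ₗ[R]
        (Fin 2 → R ⧸ IsLocalRing.maximalIdeal R) := Submodule.liftQ _ f𝔪 hker
    have hφmk : ∀ x : N, φ (Submodule.Quotient.mk x) = fun i => mkk (bN.repr x i) :=
      fun x => rfl
    have hφsurj : Function.Surjective φ := by
      intro v
      choose r hr using fun i => Ideal.Quotient.mk_surjective (v i)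
      refine ⟨Submodule.Quotient.mk (∑ i, r i • bN i), ?_⟩
      rw [hφmk]
      funext i
      have h7 : bN.repr (∑ j, r j • bN j) i = r i := by
        simp only [map_sum, _root_.map_smul, Module.Basis.repr_self, Finsupp.smul_single, smul_eq_mul,
          mul_one, Finsupp.coe_finset_sum, Finset.sum_apply, Finsupp.single_apply]
        fin_cases i <;> simp
      rw [h7, hr i]
    have hφred : ∀ (g : N →ₗ[R] N) (x : N),
        φ (LinearMap.reduceMod (IsLocalRing.maximalIdeal R) g (Submodule.Quotient.mk x))
        = ((LinearMap.toMatrix bN bN g).map mkk) *ᵥ φ (Submodule.Quotient.mk x) := by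
      intro g x
      rw [LinearMap.reduceMod, Submodule.mapQ_apply, hφmk, hφmk]
      funext i
      have h8 : bN.repr (g x) i = ((LinearMap.toMatrix bN bN g) *ᵥ (bN.repr x)) i := by
        rw [LinearMap.toMatrix_mulVec_repr bN bN g x]
      rw [h8]
      simp [Matrix.mulVec, dotProduct, Matrix.map_apply, map_sum]
    -- the span of the columns of b
    let V : Submodule R (Fin 2 → R ⧸ IsLocalRing.maximalIdeal R) :=
      Submodule.span R (Set.range bᵀ)
    have hksmul : ∀ (c : R ⧸ IsLocalRing.maximalIdeal R)
        (v : Fin 2 → R ⧸ IsLocalRing.maximalIdeal R), v ∈ V → c • v ∈ V := by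
      intro c v hv
      obtain ⟨r, rfl⟩ := Ideal.Quotient.mk_surjective c
      rw [show (Ideal.Quotient.mk (IsLocalRing.maximalIdeal R) r) • v = r • v by
        rw [← Ideal.Quotient.algebraMap_eq, algebraMap_smul]]
      exact V.smul_mem r hv
    have hmulvec_mem : ∀ w, b *ᵥ w ∈ V := by
      intro w
      have h9 : b *ᵥ w = ∑ j, w j • bᵀ j := by
        funext i
        simp [Matrix.mulVec, dotProduct, Finset.sum_apply, Matrix.transpose_apply,
          mul_comm]
      rw [h9]
      exact Submodule.sum_mem _ fun j _ => hksmul _ _ (Submodule.subset_span ⟨j, rfl⟩)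
    have hVstab : ∀ (g : G) v, v ∈ V →
        ((LinearMap.toMatrix bN bN (ρN g : N →ₗ[R] N)).map mkk) *ᵥ v ∈ V := by
      intro g v hv
      induction hv using Submodule.span_induction with
      | mem v hv =>
        obtain ⟨j, rfl⟩ := hv
        have h10 : (LinearMap.toMatrix bN bN (ρN g : N →ₗ[R] N)).map mkk *ᵥ bᵀ j
            = b *ᵥ ((LinearMap.toMatrix bM bM (ρM g : M →ₗ[R] M)).map mkk)ᵀ j := by
          funext i
          have h11 := congrFun (congrFun (hbq g) i) j
          simp only [Matrix.mul_apply] at h11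
          simpa [Matrix.mulVec, dotProduct, Matrix.transpose_apply] using h11.symm
        rw [h10]
        exact hmulvec_mem _
      | zero => rw [Matrix.mulVec_zero]; exact V.zero_mem
      | add x y hx hy ihx ihy => rw [Matrix.mulVec_add]; exact V.add_mem ihx ihy
      | smul r x hx ih =>
        rw [show r • x = (Ideal.Quotient.mk (IsLocalRing.maximalIdeal R) r) • x by
          rw [← Ideal.Quotient.algebraMap_eq, algebraMap_smul], Matrix.mulVec_smul]
        exact hksmul _ _ ih
    -- the stable subspace
    have hW : ∀ g : G, ∀ x ∈ V.comap φ,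
        LinearMap.reduceMod (IsLocalRing.maximalIdeal R) (ρN g : N →ₗ[R] N) x ∈ V.comap φ := by
      intro g x hx
      obtain ⟨y, rfl⟩ := Submodule.Quotient.mk_surjective _ x
      rw [Submodule.mem_comap] at hx ⊢
      rw [hφred (ρN g : N →ₗ[R] N) y]
      exact hVstab g _ hx
    have hWtop : V.comap φ = ⊤ := by
      rcases hirr (V.comap φ) hW with h | h
      · exfalso
        obtain ⟨x, hx⟩ := hφsurj (bᵀ j0)
        have hxW : x ∈ V.comap φ := by
          rw [Submodule.mem_comap, hx]
          exact Submodule.subset_span ⟨j0, rfl⟩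
        rw [h, Submodule.mem_bot] at hxW
        rw [hxW, map_zero] at hx
        exact hbne (by simpa [Matrix.transpose_apply] using (congrFun hx i0).symm)
      · exact h
    have hVtop : ∀ v, v ∈ V := by
      intro v
      obtain ⟨x, rfl⟩ := hφsurj v
      have hxt : x ∈ V.comap φ := hWtop ▸ Submodule.mem_top
      exact hxt
    -- b is invertible
    have hsolve : ∀ v, v ∈ V → ∃ w, b *ᵥ w = v := by
      intro v hv
      induction hv using Submodule.span_induction with
      | mem v hv =>
        obtain ⟨j, rfl⟩ := hv
        refine ⟨Pi.single j 1, ?_⟩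
        rw [Matrix.mulVec_single]
        funext i
        simp [Matrix.transpose_apply]
      | zero => exact ⟨0, Matrix.mulVec_zero b⟩
      | add x y hx hy ihx ihy =>
        obtain ⟨a, ha⟩ := ihx
        obtain ⟨c, hc⟩ := ihy
        exact ⟨a + c, by rw [Matrix.mulVec_add, ha, hc]⟩
      | smul r x hx ih =>
        obtain ⟨a, ha⟩ := ih
        refine ⟨(Ideal.Quotient.mk (IsLocalRing.maximalIdeal R) r) • a, ?_⟩
        rw [Matrix.mulVec_smul, ha, ← Ideal.Quotient.algebraMap_eq, algebraMap_smul]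
    choose ws hws using fun j => hsolve (Pi.single j 1) (hVtop _)
    have hbC : b * (Matrix.of fun i j => ws j i) = 1 := by
      ext i j
      rw [Matrix.mul_apply, Matrix.one_apply]
      have h12 := congrFun (hws j) i
      rw [Pi.single_apply] at h12
      rw [← h12]
      simp [Matrix.mulVec, dotProduct]
    have hdetb : IsUnit b.det := by
      have h13 := congrArg Matrix.det hbC
      rw [Matrix.det_mul, Matrix.det_one] at h13
      exact IsUnit.of_mul_eq_one _ h13
    have hdetB : IsUnit B.det := by
      apply hνunit
      rw [RingHom.map_det, RingHom.mapMatrix_apply, ← hbdef]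
      exact hdetb.ne_zero
    -- contradiction
    have hAb0 : (π ^ e • B).det = 0 := by
      rw [← hfac]
      show (A.map ⇑mkp).det = 0
      rw [← RingHom.mapMatrix_apply, ← RingHom.map_det]
      exact Ideal.Quotient.eq_zero_iff_mem.mpr
        (Ideal.mem_span_singleton.mpr hdvd)
    rw [Matrix.det_smul] at hAb0
    rcases mul_eq_zero.mp hAb0 with h | h
    · exact pow_ne_zero _ hπe h
    · exact hdetB.ne_zero h
  -- conclude
  have hunit : IsUnit A.det := by
    by_contra h
    obtain ⟨q, hqirr, hqd⟩ := WfDvdMonoid.exists_irreducible_factor h hdet0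
    exact hnp q (UniqueFactorizationMonoid.irreducible_iff_prime.mp hqirr) hqd
  have hb := (LinearEquiv.ofIsUnitDet hunit).bijective
  rwa [show (⇑(LinearEquiv.ofIsUnitDet hunit) : M → N) = ⇑u from
    congrArg DFunLike.coe (LinearEquiv.coe_ofIsUnitDet hunit)] at hb
end

section
/- Let O be an integral domain and r ∈ O a non-zero element. Let H be an O-module with torsion submodule H_tor, and B ⊆ H a submodule, whose torsion submodule equals B_tor = B ∩ H_tor. Set Q := H/(H_tor + B). Then the kernel of the natural map B/(B_tor + rB) → H/(H_tor + rH), induced by the inclusion B ⊆ H, is isomorphic to the r-torsion submodule Q[r] of Q. In particular, if Q has no non-zero r-torsion, then every x ∈ B with x ∈ rH + H_tor satisfies x ∈ rB + B_tor. -/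
open Submodule

namespace KerQuotAux

variable {O H : Type*} [CommRing O] [IsDomain O] [AddCommGroup H] [Module O H]

omit [IsDomain O] in
lemma exists_pick (r : O) {x : H}
    (hx : x ∈ torsion O H ⊔ Submodule.map (r • (LinearMap.id : H →ₗ[O] H)) ⊤) :
    ∃ h t, t ∈ torsion O H ∧ x = t + r • h := by
  rw [mem_sup] at hx
  obtain ⟨t, ht, y, hy, rfl⟩ := hx
  obtain ⟨h, -, rfl⟩ := hy
  exact ⟨h, t, ht, by simp⟩

lemma tor_of_smul (r : O) (hr : r ≠ 0) {x : H} (hx : r • x ∈ torsion O H) :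
    x ∈ torsion O H := by
  rw [mem_torsion_iff] at hx ⊢
  obtain ⟨c, hc⟩ := hx
  refine ⟨⟨(c : O) * r, mul_mem c.2 (mem_nonZeroDivisors_of_ne_zero hr)⟩, ?_⟩
  simp only [Submonoid.mk_smul, mul_smul]
  exact hc

lemma mk_eq (r : O) (hr : r ≠ 0) (B : Submodule O H) {t₁ t₂ h₁ h₂ : H}
    (ht₁ : t₁ ∈ torsion O H) (ht₂ : t₂ ∈ torsion O H)
    (h : t₁ + r • h₁ = t₂ + r • h₂) :
    (Submodule.Quotient.mk h₁ : H ⧸ (torsion O H ⊔ B)) = Submodule.Quotient.mk h₂ := by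
  rw [Submodule.Quotient.eq]
  refine mem_sup_left (tor_of_smul r hr ?_)
  have h2 : r • (h₁ - h₂) = t₂ - t₁ := by
    rw [smul_sub, sub_eq_sub_iff_add_eq_add, add_comm]
    exact h
  rw [h2]
  exact sub_mem ht₂ ht₁

noncomputable def pickh (r : O) {x : H}
    (hx : x ∈ torsion O H ⊔ Submodule.map (r • (LinearMap.id : H →ₗ[O] H)) ⊤) : H :=
  (exists_pick r hx).choose

omit [IsDomain O] in
lemma pickh_spec (r : O) {x : H}
    (hx : x ∈ torsion O H ⊔ Submodule.map (r • (LinearMap.id : H →ₗ[O] H)) ⊤) :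
    ∃ t, t ∈ torsion O H ∧ x = t + r • pickh r hx :=
  (exists_pick r hx).choose_spec

/-- The submodule of `H` of elements of `B` lying in `tor ⊔ rH`. -/
noncomputable def M (r : O) (B : Submodule O H) : Submodule O H :=
  B ⊓ (torsion O H ⊔ Submodule.map (r • (LinearMap.id : H →ₗ[O] H)) ⊤)

/-- The map `M → Q = H ⧸ (tor ⊔ B)` sending `b = t + r•h` to the class of `h`. -/
noncomputable def psi (r : O) (hr : r ≠ 0) (B : Submodule O H) :
    M r B →ₗ[O] (H ⧸ (torsion O H ⊔ B)) where
  toFun b := Submodule.Quotient.mk (pickh r b.2.2)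
  map_add' b c := by
    obtain ⟨tb, htb, hb⟩ := pickh_spec r b.2.2
    obtain ⟨tc, htc, hc⟩ := pickh_spec r c.2.2
    obtain ⟨ts, hts, hs⟩ := pickh_spec r (b + c).2.2
    have key : ts + r • pickh r (b + c).2.2
        = (tb + tc) + r • (pickh r b.2.2 + pickh r c.2.2) := by
      calc ts + r • pickh r (b + c).2.2 = ((b + c : M r B) : H) := hs.symm
        _ = (b : H) + (c : H) := rfl
        _ = (tb + r • pickh r b.2.2) + (tc + r • pickh r c.2.2) := by
            exact congrArg₂ (· + ·) hb hc
        _ = (tb + tc) + r • (pickh r b.2.2 + pickh r c.2.2) := by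
            rw [smul_add]; abel
    show Submodule.Quotient.mk (pickh r (b + c).2.2)
        = Submodule.Quotient.mk (pickh r b.2.2) + Submodule.Quotient.mk (pickh r c.2.2)
    rw [mk_eq r hr B hts (add_mem htb htc) key, Submodule.Quotient.mk_add]
  map_smul' a b := by
    obtain ⟨tb, htb, hb⟩ := pickh_spec r b.2.2
    obtain ⟨ts, hts, hs⟩ := pickh_spec r (a • b).2.2
    have key : ts + r • pickh r (a • b).2.2 = a • tb + r • (a • pickh r b.2.2) := by
      calc ts + r • pickh r (a • b).2.2 = ((a • b : M r B) : H) := hs.symm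
        _ = a • (b : H) := rfl
        _ = a • (tb + r • pickh r b.2.2) := congrArg (a • ·) hb
        _ = a • tb + r • (a • pickh r b.2.2) := by rw [smul_add, smul_comm a r]
    show Submodule.Quotient.mk (pickh r (a • b).2.2)
        = a • Submodule.Quotient.mk (pickh r b.2.2)
    rw [mk_eq r hr B hts (Submodule.smul_mem _ a htb) key, Submodule.Quotient.mk_smul]

lemma psi_apply (r : O) (hr : r ≠ 0) (B : Submodule O H) (b : M r B) :
    psi r hr B b = Submodule.Quotient.mk (pickh r b.2.2) := rfl

/-- `K = B_tor ⊔ rB` pulled back to `B`. -/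
noncomputable abbrev K (r : O) (B : Submodule O H) : Submodule O (↥B) :=
  comap B.subtype ((B ⊓ torsion O H) ⊔ Submodule.map (r • (LinearMap.id : H →ₗ[O] H)) B)

noncomputable def chi (r : O) (B : Submodule O H) : M r B →ₗ[O] (↥B ⧸ K r B) :=
  (K r B).mkQ ∘ₗ Submodule.inclusion (inf_le_left : M r B ≤ B)

lemma ker_chi_eq_ker_psi (r : O) (hr : r ≠ 0) (B : Submodule O H) :
    LinearMap.ker (chi r B) = LinearMap.ker (psi r hr B) := by
  ext b
  obtain ⟨t, ht, hbt⟩ := pickh_spec r b.2.2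
  constructor
  · intro hb
    have hb' : (b : H) ∈ (B ⊓ torsion O H) ⊔ Submodule.map (r • (LinearMap.id : H →ₗ[O] H)) B := by
      have := hb
      simp only [chi, LinearMap.mem_ker, LinearMap.comp_apply, Submodule.mkQ_apply,
        Submodule.Quotient.mk_eq_zero] at this
      exact this
    rw [mem_sup] at hb'
    obtain ⟨u, hu, y, hy, hxy⟩ := hb'
    obtain ⟨b', hb'B, rfl⟩ := hy
    simp only [LinearMap.smul_apply, LinearMap.id_coe, id_eq] at hxy
    have key : t + r • pickh r b.2.2 = u + r • b' := by rw [← hbt, hxy]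
    simp only [LinearMap.mem_ker, psi_apply]
    rw [mk_eq r hr B ht hu.2 key, Submodule.Quotient.mk_eq_zero]
    exact mem_sup_right hb'B
  · intro hb
    have h0 : (Submodule.Quotient.mk (pickh r b.2.2) : H ⧸ (torsion O H ⊔ B)) = 0 := hb
    rw [Submodule.Quotient.mk_eq_zero, mem_sup] at h0
    obtain ⟨t', ht', b', hb'B, hsum⟩ := h0
    have hbe : (b : H) = (t + r • t') + r • b' := by
      rw [hbt, ← hsum, smul_add]
      abel
    have htor : t + r • t' ∈ torsion O H := add_mem ht (Submodule.smul_mem _ r ht')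
    have hBmem : t + r • t' ∈ B := by
      have h3 : t + r • t' = (b : H) - r • b' := by rw [hbe]; abel
      rw [h3]
      exact sub_mem b.2.1 (B.smul_mem r hb'B)
    simp only [chi, LinearMap.mem_ker, LinearMap.comp_apply, Submodule.mkQ_apply,
      Submodule.Quotient.mk_eq_zero, mem_comap, coe_subtype, Submodule.coe_inclusion]
    show (b : H) ∈ (B ⊓ torsion O H) ⊔ Submodule.map (r • (LinearMap.id : H →ₗ[O] H)) B
    rw [mem_sup]
    exact ⟨t + r • t', ⟨hBmem, htor⟩, r • b', ⟨b', hb'B, by simp⟩, by rw [hbe]⟩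

lemma range_psi (r : O) (hr : r ≠ 0) (B : Submodule O H) :
    LinearMap.range (psi r hr B) = torsionBy O (H ⧸ (torsion O H ⊔ B)) r := by
  ext q
  constructor
  · rintro ⟨b, rfl⟩
    obtain ⟨t, ht, hbt⟩ := pickh_spec r b.2.2
    rw [mem_torsionBy_iff, psi_apply, ← Submodule.Quotient.mk_smul,
      Submodule.Quotient.mk_eq_zero]
    have h3 : r • pickh r b.2.2 = (b : H) - t :=
      eq_sub_iff_add_eq.mpr (by rw [add_comm]; exact hbt.symm)
    rw [h3]
    exact sub_mem (mem_sup_right b.2.1) (mem_sup_left ht)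
  · intro hq
    obtain ⟨h, rfl⟩ := Submodule.Quotient.mk_surjective _ q
    rw [mem_torsionBy_iff, ← Submodule.Quotient.mk_smul,
      Submodule.Quotient.mk_eq_zero, mem_sup] at hq
    obtain ⟨t, ht, b0, hb0, hsum⟩ := hq
    have hb0B : b0 ∈ B := hb0
    have hb0mem : b0 ∈ torsion O H ⊔ Submodule.map (r • (LinearMap.id : H →ₗ[O] H)) ⊤ := by
      rw [mem_sup]
      exact ⟨-t, neg_mem ht, r • h, ⟨h, trivial, by simp⟩, by rw [← hsum]; abel⟩
    refine ⟨⟨b0, hb0B, hb0mem⟩, ?_⟩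
    obtain ⟨t', ht', hbt'⟩ := pickh_spec r (⟨b0, hb0B, hb0mem⟩ : M r B).2.2
    rw [psi_apply]
    refine mk_eq r hr B ht' (neg_mem ht) ?_
    rw [← hbt']
    show b0 = -t + r • h
    rw [← hsum]; abel

end KerQuotAux

/-- Let `O` be an integral domain, `r ∈ O` non-zero, `H` an `O`-module with torsion
submodule `H_tor`, and `B ⊆ H` a submodule (whose torsion submodule is
`B_tor = B ∩ H_tor`).  Set `Q := H/(H_tor + B)`.  Then the kernel of the natural map
`B/(B_tor + rB) → H/(H_tor + rH)` is isomorphic to the `r`-torsion submodule `Q[r]` of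
`Q`.  In particular, if `Q` has no non-zero `r`-torsion, then every `x ∈ B` with
`x ∈ rH + H_tor` satisfies `x ∈ rB + B_tor`. -/
theorem ker_quotient_map_iso_torsionBy {O H : Type*} [CommRing O] [IsDomain O]
    [AddCommGroup H] [Module O H] (r : O) (hr : r ≠ 0) (B : Submodule O H) :
    let tor : Submodule O H := Submodule.torsion O H
    let rH : Submodule O H := Submodule.map (r • (LinearMap.id : H →ₗ[O] H)) ⊤
    let rB : Submodule O H := Submodule.map (r • (LinearMap.id : H →ₗ[O] H)) B
    let f : (↥B ⧸ Submodule.comap B.subtype ((B ⊓ tor) ⊔ rB)) →ₗ[O]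
        (H ⧸ (tor ⊔ rH)) :=
      Submodule.mapQ _ _ B.subtype
        (Submodule.comap_mono (sup_le (inf_le_right.trans le_sup_left)
          ((Submodule.map_mono le_top).trans le_sup_right)))
    Nonempty
      (↥(LinearMap.ker f) ≃ₗ[O]
        ↥(Submodule.torsionBy O (H ⧸ (tor ⊔ B)) r)) ∧
    (Submodule.torsionBy O (H ⧸ (tor ⊔ B)) r = ⊥ →
      ∀ x ∈ B, x ∈ rH ⊔ tor → x ∈ rB ⊔ (B ⊓ tor)) := by
  intro tor rH rB f
  constructor
  · -- the isomorphism
    have hrange : LinearMap.range (KerQuotAux.chi r B) = LinearMap.ker f := by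
      ext x
      constructor
      · rintro ⟨b, rfl⟩
        refine (LinearMap.mem_ker (f := f)).mpr ?_
        show f (Submodule.Quotient.mk (Submodule.inclusion _ b)) = 0
        rw [Submodule.mapQ_apply, Submodule.Quotient.mk_eq_zero]
        exact b.2.2
      · intro hx
        obtain ⟨y, rfl⟩ := Submodule.mkQ_surjective (Submodule.comap B.subtype ((B ⊓ tor) ⊔ rB)) x
        replace hx := (LinearMap.mem_ker (f := f)).mp hx
        have hx' : (y : H) ∈ tor ⊔ rH := by
          have h1 : (Submodule.Quotient.mk (B.subtype y) : H ⧸ (tor ⊔ rH)) = 0 :=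
            (Submodule.mapQ_apply _ _ _ _).symm.trans hx
          exact (Submodule.Quotient.mk_eq_zero _).mp h1
        refine ⟨⟨(y : H), y.2, hx'⟩, ?_⟩
        show Submodule.Quotient.mk (Submodule.inclusion _ _) = Submodule.Quotient.mk y
        exact congrArg Submodule.Quotient.mk (Subtype.ext rfl)
    exact ⟨(LinearEquiv.ofEq _ _ hrange.symm).trans
      (((KerQuotAux.chi r B).quotKerEquivRange).symm.trans
        ((Submodule.quotEquivOfEq _ _ (KerQuotAux.ker_chi_eq_ker_psi r hr B)).trans
          (((KerQuotAux.psi r hr B).quotKerEquivRange).trans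
            (LinearEquiv.ofEq _ _ (KerQuotAux.range_psi r hr B)))))⟩
  · -- the consequence
    intro hQ x hxB hx
    rw [Submodule.mem_sup] at hx
    obtain ⟨y, hy, t, ht, hsum⟩ := hx
    obtain ⟨h, -, rfl⟩ := hy
    simp only [LinearMap.smul_apply, LinearMap.id_coe, id_eq] at hsum
    -- x = r • h + t
    have hmk : (Submodule.Quotient.mk h : H ⧸ (tor ⊔ B)) ∈
        Submodule.torsionBy O (H ⧸ (tor ⊔ B)) r := by
      rw [Submodule.mem_torsionBy_iff, ← Submodule.Quotient.mk_smul,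
        Submodule.Quotient.mk_eq_zero]
      have : r • h = x - t := by rw [← hsum]; abel
      rw [this]
      exact sub_mem (Submodule.mem_sup_right hxB) (Submodule.mem_sup_left ht)
    rw [hQ, Submodule.mem_bot] at hmk
    rw [Submodule.Quotient.mk_eq_zero, Submodule.mem_sup] at hmk
    obtain ⟨t', ht', b, hb, hsumh⟩ := hmk
    rw [Submodule.mem_sup]
    refine ⟨r • b, ⟨b, hb, by simp⟩, x - r • b, ⟨?_, ?_⟩, by abel⟩
    · exact sub_mem hxB (B.smul_mem r hb)
    · have : x - r • b = r • t' + t := by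
        rw [← hsum, ← hsumh, smul_add]; abel
      rw [this]
      exact add_mem (Submodule.smul_mem _ r ht') ht
end
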